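/- Let f : ℝ → ℝ be C², v ∈ ℝ, h : ℝ → ℝ be C¹, and Ψ(t,x) = f(x − vt). Define K = (∂ₓΨ, −∂ₜΨ, h(Ψ), 0) and Δ = (∂ₓΨ)² − (∂ₜΨ)² − h(Ψ)². On the open set where Δ > 0, define the unit timelike vector field u = K/√Δ. Then u satisfies η(u,u) = −1 and the flat geodesic equation u^ν ∂_ν u^μ = 0 at every point of that set. (This is the key computation showing that the leaves of ker F, spanned by u and ∂_z, have vanishing mean curvature, i.e. are minimal submanifolds.) -/

import Mathlib

noncomputable section

/-- `∂ₜΨ`. -/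
def psiT (Ψ : ℝ × ℝ → ℝ) (t x : ℝ) : ℝ := deriv (fun s => Ψ (s, x)) t

/-- `∂ₓΨ`. -/
def psiX (Ψ : ℝ × ℝ → ℝ) (t x : ℝ) : ℝ := deriv (fun s => Ψ (t, s)) x

/-- The kernel vector field `K = (∂ₓΨ, −∂ₜΨ, h(Ψ), 0)` on ℝ⁴ (independent of `y,z`). -/
def KF (Ψ : ℝ × ℝ → ℝ) (h : ℝ → ℝ) (p : Fin 4 → ℝ) : Fin 4 → ℝ :=
  ![psiX Ψ (p 0) (p 1), -(psiT Ψ (p 0) (p 1)), h (Ψ (p 0, p 1)), 0]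

/-- The type invariant `Δ = (∂ₓΨ)² − (∂ₜΨ)² − h(Ψ)²`. -/
def Delta (Ψ : ℝ × ℝ → ℝ) (h : ℝ → ℝ) (t x : ℝ) : ℝ :=
  (psiX Ψ t x) ^ 2 - (psiT Ψ t x) ^ 2 - (h (Ψ (t, x))) ^ 2

/-- The normalized vector field `u = K/√Δ`. -/
def uvec (Ψ : ℝ × ℝ → ℝ) (h : ℝ → ℝ) (p : Fin 4 → ℝ) (μ : Fin 4) : ℝ :=
  KF Ψ h p μ / Real.sqrt (Delta Ψ h (p 0) (p 1))

/-- Coordinate partial derivative `∂_ν f` on ℝ⁴. -/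
def pd (ν : Fin 4) (f : (Fin 4 → ℝ) → ℝ) (p : Fin 4 → ℝ) : ℝ :=
  deriv (fun s => f (Function.update p ν s)) (p ν)

/-- for a traveling wave `Ψ(t,x) = f(x − vt)`, on the set where `Δ > 0`
the unit vector field `u = K/√Δ` satisfies `η(u,u) = −1` and the flat geodesic equation
`u^ν ∂_ν u^μ = 0`. -/
theorem stmt16 (f : ℝ → ℝ) (hf : ContDiff ℝ 2 f) (v : ℝ)
    (h : ℝ → ℝ) (hh : ContDiff ℝ 1 h)
    (Ψ : ℝ × ℝ → ℝ) (hΨ : ∀ t x : ℝ, Ψ (t, x) = f (x - v * t))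
    (p : Fin 4 → ℝ) (hp : 0 < Delta Ψ h (p 0) (p 1)) :
    (-(uvec Ψ h p 0) ^ 2 + (uvec Ψ h p 1) ^ 2 + (uvec Ψ h p 2) ^ 2 + (uvec Ψ h p 3) ^ 2
        = -1) ∧
    (∀ μ : Fin 4, ∑ ν : Fin 4, uvec Ψ h p ν * pd ν (fun q => uvec Ψ h q μ) p = 0) := by
  classical
  have hfd : Differentiable ℝ f := hf.differentiable (by norm_num)
  have hf2 : ContDiff ℝ ((1:ℕ) + 1) f := by exact_mod_cast hf
  have hF'cd : ContDiff ℝ 1 (deriv f) := by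
    have := (contDiff_succ_iff_deriv.mp hf2).2.2
    exact_mod_cast this
  have hF'd : Differentiable ℝ (deriv f) := hF'cd.differentiable one_ne_zero
  have hhd : Differentiable ℝ h := hh.differentiable one_ne_zero
  have hfcomp : Differentiable ℝ (fun s => h (f s)) := hhd.comp hfd
  have hpsiT : ∀ t x : ℝ, psiT Ψ t x = -v * deriv f (x - v * t) := by
    intro t x
    have h1 : (fun s => Ψ (s, x)) = fun s => f (x - v * s) := funext fun s => hΨ s x
    have h2 : HasDerivAt (fun s : ℝ => x - v * s) (-v) t := by
      simpa using ((hasDerivAt_id t).const_mul v).const_sub x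
    have h3 : HasDerivAt (fun s : ℝ => f (x - v * s)) (deriv f (x - v * t) * (-v)) t :=
      (hfd (x - v * t)).hasDerivAt.comp t h2
    rw [psiT, h1, h3.deriv]; ring
  have hpsiX : ∀ t x : ℝ, psiX Ψ t x = deriv f (x - v * t) := by
    intro t x
    have h1 : (fun s => Ψ (t, s)) = fun s => f (s - v * t) := funext fun s => hΨ t s
    have h2 : HasDerivAt (fun s : ℝ => s - v * t) 1 x := (hasDerivAt_id x).sub_const _
    have h3 : HasDerivAt (fun s : ℝ => f (s - v * t)) (deriv f (x - v * t) * 1) x :=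
      (hfd (x - v * t)).hasDerivAt.comp x h2
    rw [psiX, h1, h3.deriv, mul_one]
  set D : ℝ → ℝ := fun s => deriv f s ^ 2 - (v * deriv f s) ^ 2 - (h (f s)) ^ 2 with hD
  have hDelta : ∀ t x, Delta Ψ h t x = D (x - v * t) := by
    intro t x
    rw [Delta, hpsiT, hpsiX, hΨ, hD]; ring
  have hDpos : 0 < D (p 1 - v * p 0) := hDelta (p 0) (p 1) ▸ hp
  set w := p 1 - v * p 0 with hw
  have hsnz : Real.sqrt (D w) ≠ 0 := Real.sqrt_ne_zero'.mpr hDpos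
  have hsq : Real.sqrt (D w) ^ 2 = D w := Real.sq_sqrt hDpos.le
  set G : Fin 4 → ℝ → ℝ := fun μ s => ![deriv f s, v * deriv f s, h (f s), (0:ℝ)] μ / Real.sqrt (D s) with hG
  have huvec : ∀ (q : Fin 4 → ℝ) (μ : Fin 4), uvec Ψ h q μ = G μ (q 1 - v * q 0) := by
    intro q μ
    rw [uvec, KF, hDelta, hG]
    congr 1
    fin_cases μ <;> simp [hpsiT, hpsiX, hΨ]
  have hDdiff : DifferentiableAt ℝ D w := by
    rw [hD]
    exact (((hF'd w).pow 2).sub (((hF'd w).const_mul v).pow 2)).sub ((hfcomp w).pow 2)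
  have hsqrtdiff : DifferentiableAt ℝ (fun s => Real.sqrt (D s)) w :=
    hDdiff.sqrt hDpos.ne'
  have hGdiff : ∀ μ : Fin 4, DifferentiableAt ℝ (G μ) w := by
    intro μ
    have hnum : DifferentiableAt ℝ (fun s => ![deriv f s, v * deriv f s, h (f s), (0:ℝ)] μ) w := by
      fin_cases μ
      · simpa using hF'd w
      · simpa using (hF'd w).const_mul v
      · simpa using hfcomp w
      · simp
    rw [hG]
    exact hnum.div hsqrtdiff hsnz
  have key : ∀ μ : Fin 4, ∑ ν : Fin 4, uvec Ψ h p ν * pd ν (fun q => uvec Ψ h q μ) p = 0 := by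
    intro μ
    have hd : HasDerivAt (G μ) (deriv (G μ) w) w := (hGdiff μ).hasDerivAt
    have h0 : pd 0 (fun q => uvec Ψ h q μ) p = deriv (G μ) w * (-v) := by
      have he : (fun s => uvec Ψ h (Function.update p 0 s) μ) = fun s => G μ (p 1 - v * s) := by
        funext s
        rw [huvec]
        simp [Function.update_apply]
      have hi : HasDerivAt (fun s : ℝ => p 1 - v * s) (-v) (p 0) := by
        simpa using ((hasDerivAt_id (p 0)).const_mul v).const_sub (p 1)
      rw [pd, he]
      exact (hd.comp (p 0) hi).deriv
    have h1 : pd 1 (fun q => uvec Ψ h q μ) p = deriv (G μ) w * 1 := by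
      have he : (fun s => uvec Ψ h (Function.update p 1 s) μ) = fun s => G μ (s - v * p 0) := by
        funext s
        rw [huvec]
        simp [Function.update_apply]
      have hi : HasDerivAt (fun s : ℝ => s - v * p 0) 1 (p 1) := (hasDerivAt_id (p 1)).sub_const _
      rw [pd, he]
      exact (hd.comp (p 1) hi).deriv
    have h2 : pd 2 (fun q => uvec Ψ h q μ) p = 0 := by
      have he : (fun s => uvec Ψ h (Function.update p 2 s) μ) = fun _ => G μ (p 1 - v * p 0) := by
        funext s
        rw [huvec]
        simp [Function.update_apply]
      rw [pd, he]
      exact deriv_const _ _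
    have h3 : pd 3 (fun q => uvec Ψ h q μ) p = 0 := by
      have he : (fun s => uvec Ψ h (Function.update p 3 s) μ) = fun _ => G μ (p 1 - v * p 0) := by
        funext s
        rw [huvec]
        simp [Function.update_apply]
      rw [pd, he]
      exact deriv_const _ _
    rw [Fin.sum_univ_four, h0, h1, h2, h3]
    simp only [huvec, hG]
    simp only [Matrix.cons_val_zero, Matrix.cons_val_one, Matrix.head_cons]
    ring
  refine ⟨?_, key⟩
  simp only [huvec, hG]
  simp only [Matrix.cons_val_zero, Matrix.cons_val_one, Matrix.head_cons,
    Matrix.cons_val_two, Matrix.tail_cons, Matrix.cons_val_three]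
  rw [← hw]
  have e : ∀ a : ℝ, (a / Real.sqrt (D w)) ^ 2 = a ^ 2 / D w := by
    intro a; rw [div_pow, hsq]
  rw [e, e, e, e]
  field_simp
  rw [hD]
  ring
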